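/- Suppose all m jobs are unit-size, let (σ₁,…,σ_n) be a profile of preferred schedules, and let τ be a schedule in which job ℓ occupies position q and job k occupies position q+1 (i.e., τ(ℓ) = q and τ(k) = q+1), while every agent schedules k before ℓ (σ_a(k) < σ_a(ℓ) for all a). Let τ' be the schedule obtained from τ by swapping the positions of jobs k and ℓ. Then ∑_{a=1}^{n} T(τ', σ_a) ≤ ∑_{a=1}^{n} T(τ, σ_a). -/
import Mathlib


/-- Swap lemma for unit-size jobs: if job `ℓ` occupies position `q` and job `k`
position `q+1` in schedule `τ`, while every agent schedules `k` before `ℓ`, then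
swapping the positions of `k` and `ℓ` does not increase the total tardiness
`∑_a ∑_i max (0, τ(i) − σ_a(i))`. -/
theorem swap_adjacent_unanimous_pair_total_tardiness (m n : ℕ)
    (σs : Fin n → Equiv.Perm (Fin m)) (τ : Equiv.Perm (Fin m))
    (k ℓ : Fin m) (q : ℕ)
    (hℓ : (τ ℓ : ℕ) = q) (hk : (τ k : ℕ) = q + 1)
    (hpref : ∀ a : Fin n, σs a k < σs a ℓ) :
    ∑ a : Fin n, ∑ i : Fin m, (((τ.trans (Equiv.swap (τ k) (τ ℓ))) i : ℕ) - (σs a i : ℕ))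
      ≤ ∑ a : Fin n, ∑ i : Fin m, ((τ i : ℕ) - (σs a i : ℕ)) := by
  have hkl : k ≠ ℓ := by
    intro h; rw [h] at hk; omega
  apply Finset.sum_le_sum
  intro a _
  have hs : ({k, ℓ} : Finset (Fin m)) ⊆ Finset.univ := Finset.subset_univ _
  rw [← Finset.sum_sdiff hs, ← Finset.sum_sdiff hs]
  have hfix : ∀ i ∈ Finset.univ \ ({k, ℓ} : Finset (Fin m)),
      (((τ.trans (Equiv.swap (τ k) (τ ℓ))) i : ℕ) - (σs a i : ℕ))
        = ((τ i : ℕ) - (σs a i : ℕ)) := by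
    intro i hi
    simp only [Finset.mem_sdiff, Finset.mem_insert, Finset.mem_singleton] at hi
    have h1 : τ i ≠ τ k := fun h => hi.2 (Or.inl (τ.injective h))
    have h2 : τ i ≠ τ ℓ := fun h => hi.2 (Or.inr (τ.injective h))
    simp [Equiv.swap_apply_of_ne_of_ne h1 h2]
  rw [Finset.sum_congr rfl hfix]
  apply Nat.add_le_add_left
  rw [Finset.sum_pair hkl, Finset.sum_pair hkl]
  simp only [Equiv.trans_apply, Equiv.swap_apply_left, Equiv.swap_apply_right]
  have := hpref a
  have hσ : (σs a k : ℕ) < (σs a ℓ : ℕ) := this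
  omega
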